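/- Conditioned on (X⁺, H⁺) = (x, h), let L = x + H/tan Θᵀ_{x,h}, where tan Θᵀ_{x,h} has density f(t) = (ρ/t²)·exp(−μh − e^{−μh}ρ(1/t − x/h)) on (0, h/x], ρ = λ/μ, and H > 0 is a constant. Then E[L] = x + H·(e^{μh}h + xρ)/(hρ), and hence E[L − (x + Hx/h)] = H·e^{μh}/ρ. -/

import Mathlib

open MeasureTheory Real Set Filter

private lemma tendsto_aux (A B c d : ℝ) (hc : 0 < c) :
    Tendsto (fun t : ℝ => (A + B / t) * Real.exp (-c * (1 / t) + d))
      (nhdsWithin 0 (Set.Ioi 0)) (nhds 0) := by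
  have e1 : Tendsto (fun u : ℝ => c * u) atTop atTop :=
    Tendsto.const_mul_atTop hc tendsto_id
  have t1 : Tendsto (fun u : ℝ => Real.exp (-(c * u))) atTop (nhds 0) :=
    Real.tendsto_exp_neg_atTop_nhds_zero.comp e1
  have t2 : Tendsto (fun u : ℝ => (c * u) * Real.exp (-(c * u))) atTop (nhds 0) := by
    have := (Real.tendsto_pow_mul_exp_neg_atTop_nhds_zero 1).comp e1
    simpa [Function.comp_def] using this
  have h2 : Tendsto (fun u : ℝ => (A + B * u) * Real.exp (-c * u + d)) atTop (nhds 0) := by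
    have h := ((t1.const_mul A).add (t2.const_mul (B / c))).const_mul (Real.exp d)
    simp only [mul_zero, add_zero, zero_add] at h
    refine h.congr fun u => ?_
    have : Real.exp (-c * u + d) = Real.exp (-(c * u)) * Real.exp d := by
      rw [← Real.exp_add]; ring_nf
    rw [this]
    field_simp
  have h1 : Tendsto (fun t : ℝ => 1 / t) (nhdsWithin 0 (Set.Ioi 0)) atTop := by
    simpa [one_div] using tendsto_inv_nhdsGT_zero (𝕜 := ℝ)
  have := h2.comp h1
  refine this.congr fun t => ?_
  simp [div_eq_mul_inv]

private lemma deriv_aux (A B c e : ℝ) {t : ℝ} (ht : t ≠ 0) :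
    HasDerivAt (fun s : ℝ => (A + B / s) * Real.exp (-c * (1 / s - e)))
      ((A * c - B + B * c / t) / t ^ 2 * Real.exp (-c * (1 / t - e))) t := by
  have hinv : HasDerivAt (fun s : ℝ => s⁻¹) (-(t ^ 2)⁻¹) t := hasDerivAt_inv ht
  have h1 : HasDerivAt (fun s : ℝ => A + B / s) (B * -(t ^ 2)⁻¹) t := by
    simpa [div_eq_mul_inv] using ((hinv.const_mul B).const_add A)
  have hin : HasDerivAt (fun s : ℝ => -c * (1 / s - e)) (-c * -(t ^ 2)⁻¹) t := by
    simpa [one_div] using ((hinv.sub_const e).const_mul (-c))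
  have h2 := hin.exp
  have : HasDerivAt (fun s : ℝ => (A + B / s) * Real.exp (-c * (1 / s - e))) _ t := h1.mul h2
  convert this using 1
  ring

set_option maxHeartbeats 1000000 in
/-- Key integral: for `0 < c`, `0 < b`, `0 < B`, `0 ≤ a + B/b`,
`∫_{(0,b)} (a + B/t) (c/t²) e^{-c(1/t - 1/b)} dt = a + B/b + B/c`. -/
private lemma integral_key (a B c b : ℝ) (hc : 0 < c) (hb : 0 < b) (hB : 0 < B)
    (ha : 0 ≤ a + B / b) :
    ∫ t in Set.Ioo 0 b, (a + B / t) * ((c / t ^ 2) * Real.exp (-c * (1 / t - 1 / b)))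
      = a + B / b + B / c := by
  set F : ℝ → ℝ := fun s => (a + B / c + B / s) * Real.exp (-c * (1 / s - 1 / b)) with hF
  set g : ℝ → ℝ :=
      fun t => (a + B / t) * ((c / t ^ 2) * Real.exp (-c * (1 / t - 1 / b))) with hg
  -- derivative of F is g on (0, b)
  have hderiv : ∀ t : ℝ, t ≠ 0 → HasDerivAt F (g t) t := by
    intro t ht
    have := deriv_aux (a + B / c) B c (1 / b) ht
    convert this using 1
    rw [hg]
    beta_reduce
    have hc' : c ≠ 0 := hc.ne'
    field_simp
    ring
  -- nonnegativity of g on Ioo 0 b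
  have hgpos : ∀ t ∈ Set.Ioo 0 b, 0 ≤ g t := by
    intro t htm
    obtain ⟨ht0, htb⟩ := htm
    have h1 : B / b ≤ B / t := by
      apply div_le_div_of_nonneg_left hB.le ht0 htb.le
    have h2 : 0 ≤ a + B / t := le_trans ha (by linarith)
    have h3 : 0 < c / t ^ 2 := by positivity
    exact mul_nonneg h2 (le_of_lt (mul_pos h3 (Real.exp_pos _)))
  -- limit of F at 0⁺
  have hlim0 : Tendsto F (nhdsWithin 0 (Set.Ioi 0)) (nhds 0) := by
    have := tendsto_aux (a + B / c) B c (c * (1 / b)) hc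
    refine this.congr fun t => ?_
    rw [hF]
    ring_nf
  -- extended antiderivative, continuous on [0, b]
  set Fe : ℝ → ℝ := fun s => if s ≤ 0 then 0 else F s with hFe
  have hFeq : ∀ s : ℝ, 0 < s → Fe s = F s := by
    intro s hs; simp [hFe, not_le.mpr hs]
  have hFcont : ContinuousOn Fe (Set.Icc 0 b) := by
    intro t htm
    rcases eq_or_lt_of_le htm.1 with h0 | h0
    · -- t = 0
      subst h0
      have h1 : ContinuousWithinAt Fe (Set.Ioi 0) 0 := by
        unfold ContinuousWithinAt
        have : Fe 0 = 0 := by simp [hFe]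
        rw [this]
        refine hlim0.congr' ?_
        filter_upwards [self_mem_nhdsWithin] with s hs
        exact (hFeq s hs).symm
      have h2 : ContinuousWithinAt Fe (Set.Ici 0) 0 :=
        (continuousWithinAt_Ioi_iff_Ici).mp h1
      exact h2.mono Set.Icc_subset_Ici_self
    · -- 0 < t
      have hF_at : ContinuousAt F t := ((hderiv t h0.ne').differentiableAt).continuousAt
      have : ContinuousAt Fe t := by
        refine hF_at.congr ?_
        filter_upwards [Ioi_mem_nhds h0] with s hs
        exact (hFeq s hs).symm
      exact this.continuousWithinAt
  have hFederiv : ∀ t ∈ Set.Ioo 0 b, HasDerivAt Fe (g t) t := by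
    intro t htm
    refine (hderiv t htm.1.ne').congr_of_eventuallyEq ?_
    filter_upwards [Ioi_mem_nhds htm.1] with s hs
    exact hFeq s hs
  -- integrability
  have hint : IntegrableOn g (Set.Ioc 0 b) :=
    intervalIntegral.integrableOn_deriv_of_nonneg hFcont hFederiv hgpos
  have hint' : IntervalIntegrable g volume 0 b := by
    rw [intervalIntegrable_iff_integrableOn_Ioc_of_le hb.le]
    exact hint
  -- limits for FTC
  have hlimb : Tendsto F (nhdsWithin b (Set.Iio b)) (nhds (F b)) := by
    have : ContinuousAt F b := ((hderiv b hb.ne').differentiableAt).continuousAt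
    exact this.continuousWithinAt
  have hFTC := intervalIntegral.integral_eq_sub_of_hasDerivAt_of_tendsto hb
    (f := F) (f' := g) (fa := 0) (fb := F b)
    (fun t htm => hderiv t htm.1.ne') hint' hlim0 hlimb
  have hIoo : ∫ t in Set.Ioo 0 b, g t = F b - 0 := by
    rw [← MeasureTheory.integral_Ioc_eq_integral_Ioo, ← intervalIntegral.integral_of_le hb.le]
    exact hFTC
  rw [hg] at hIoo
  beta_reduce at hIoo
  rw [hIoo, hF]
  beta_reduce
  have h0 : -c * (1 / b - 1 / b) = 0 := by ring
  rw [h0, Real.exp_zero]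
  ring

theorem transmissive_RIS_mean_visible_length
    (lam mu x h H : ℝ) (hlam : 0 < lam) (hmu : 0 < mu) (hx : 0 < x) (hh : 0 < h)
    (hH : 0 < H) (rho : ℝ) (hrho : rho = lam / mu) :
    (∫ t in Set.Ioo 0 (h / x),
        (x + H / t) * ((rho / t ^ 2) *
          Real.exp (-(mu * h) - Real.exp (-(mu * h)) * rho * (1 / t - x / h)))
      = x + H * (Real.exp (mu * h) * h + x * rho) / (h * rho))
    ∧ (∫ t in Set.Ioo 0 (h / x),
        ((x + H / t) - (x + H * x / h)) * ((rho / t ^ 2) *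
          Real.exp (-(mu * h) - Real.exp (-(mu * h)) * rho * (1 / t - x / h)))
      = H * Real.exp (mu * h) / rho) := by
  have hrho0 : 0 < rho := by rw [hrho]; positivity
  set c : ℝ := Real.exp (-(mu * h)) * rho with hc
  have hc0 : 0 < c := by positivity
  set b : ℝ := h / x with hb
  have hb0 : 0 < b := by positivity
  have hbinv : 1 / b = x / h := by rw [hb, one_div_div]
  -- pointwise rewriting of the density
  have hpt : ∀ t : ℝ, (rho / t ^ 2) *
      Real.exp (-(mu * h) - Real.exp (-(mu * h)) * rho * (1 / t - x / h))
      = (c / t ^ 2) * Real.exp (-c * (1 / t - 1 / b)) := by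
    intro t
    rw [hbinv]
    have : -(mu * h) - Real.exp (-(mu * h)) * rho * (1 / t - x / h)
        = (-(mu * h)) + (-c * (1 / t - x / h)) := by rw [hc]; ring
    rw [this, Real.exp_add, hc]
    ring
  have hec : Real.exp (mu * h) / rho = 1 / c := by
    rw [hc, Real.exp_neg]
    field_simp
  constructor
  · have h1 : (∫ t in Set.Ioo 0 b,
        (x + H / t) * ((rho / t ^ 2) *
          Real.exp (-(mu * h) - Real.exp (-(mu * h)) * rho * (1 / t - x / h))))
        = ∫ t in Set.Ioo 0 b,
          (x + H / t) * ((c / t ^ 2) * Real.exp (-c * (1 / t - 1 / b))) := by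
      apply MeasureTheory.integral_congr_ae
      filter_upwards with t
      rw [hpt t]
    rw [h1, integral_key x H c b hc0 hb0 hH (by positivity), hb, hc, Real.exp_neg]
    have hexp : Real.exp (mu * h) ≠ 0 := (Real.exp_pos _).ne'
    field_simp
    ring
  · have h1 : (∫ t in Set.Ioo 0 b,
        ((x + H / t) - (x + H * x / h)) * ((rho / t ^ 2) *
          Real.exp (-(mu * h) - Real.exp (-(mu * h)) * rho * (1 / t - x / h))))
        = ∫ t in Set.Ioo 0 b,
          ((-(H * x / h)) + H / t) * ((c / t ^ 2) * Real.exp (-c * (1 / t - 1 / b))) := by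
      apply MeasureTheory.integral_congr_ae
      filter_upwards with t
      rw [hpt t]
      ring
    have h2 : (-(H * x / h)) + H / b = 0 := by
      rw [hb]
      field_simp
      ring
    rw [h1, integral_key (-(H * x / h)) H c b hc0 hb0 hH (by rw [h2]), h2, zero_add,
      hc, Real.exp_neg]
    have hexp : Real.exp (mu * h) ≠ 0 := (Real.exp_pos _).ne'
    field_simp
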